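/- arXiv:1405.4427 — 5 statements merged into one kernel-verified Lean document; each statement's English description precedes it below -/
import Mathlib

section
/- Let H be a complex Hilbert space, α : H → H a linear isometry, E = {x ∈ H : α(x) = μx for some μ ∈ ℂ with |μ| = 1} the set of unimodular eigenvectors, and K the closed linear span of E. Then α maps the orthogonal complement K^⊥ into itself. -/
open scoped ComplexInnerProductSpace

/-- the orthogonal complement of the closed span of the unimodular
eigenvectors of a linear isometry α is invariant under α. -/
theorem orthocomplement_eigenspan_invariant
    {H : Type*} [NormedAddCommGroup H] [InnerProductSpace ℂ H] [CompleteSpace H]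
    (α : H →L[ℂ] H) (hiso : ∀ y : H, ‖α y‖ = ‖y‖)
    (E : Set H) (hE : E = {y : H | ∃ μ : ℂ, ‖μ‖ = 1 ∧ α y = μ • y})
    (K : Submodule ℂ H) (hK : K = (Submodule.span ℂ E).topologicalClosure) :
    ∀ y ∈ Kᗮ, α y ∈ Kᗮ := by
  intro y hy
  have hKorth : Kᗮ = (Submodule.span ℂ E)ᗮ := by
    rw [hK, ← Submodule.orthogonal_orthogonal_eq_closure,
      Submodule.triorthogonal_eq_orthogonal]
  rw [hKorth] at hy ⊢
  -- pass to the isometry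
  set f : H →ₗᵢ[ℂ] H := ⟨α.toLinearMap, hiso⟩ with hf
  have hinner : ∀ u v : H, ⟪α u, α v⟫ = ⟪u, v⟫ := fun u v =>
    f.inner_map_map u v
  rw [Submodule.mem_orthogonal]
  intro u hu
  induction hu using Submodule.span_induction with
  | mem e he =>
    rw [hE] at he
    obtain ⟨μ, hμ, hαe⟩ := he
    have hμ0 : μ ≠ 0 := by
      intro h; rw [h] at hμ; simp at hμ
    have h1 : ⟪α e, α y⟫ = ⟪e, y⟫ := hinner e y
    have h2 : ⟪e, y⟫ = 0 :=
      Submodule.inner_right_of_mem_orthogonal (Submodule.subset_span ((hE ▸ Set.mem_setOf_eq ▸ ⟨μ, hμ, hαe⟩ : e ∈ E))) hy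
    rw [hαe, inner_smul_left] at h1
    have := h1.trans h2
    have hc : (starRingEnd ℂ) μ ≠ 0 := by simpa using hμ0
    rcases mul_eq_zero.mp this with h | h
    · exact absurd h hc
    · exact h
  | zero => simp
  | add a b _ _ ha hb => rw [inner_add_left, ha, hb, add_zero]
  | smul c a _ ha => rw [inner_smul_left, ha, mul_zero]
end

section
/- Let H be a complex Hilbert space, α a linear isometry of H, K the closed linear span of the unimodular eigenvectors of α, and x ∈ K^⊥. Then for every t ∈ ℝ, the Cesàro averages (1/n) ∑_{l=1}^{n} e^{2πilt} α^l(x) converge in norm to 0 as n → ∞. -/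
open Filter Finset
open scoped ComplexInnerProductSpace

/-- for x orthogonal to the closed span of the unimodular eigenvectors
of a linear isometry α, the twisted Cesàro averages converge to 0 in norm for every t. -/
theorem twisted_averages_tendsto_zero_on_orthocomplement
    {H : Type*} [NormedAddCommGroup H] [InnerProductSpace ℂ H] [CompleteSpace H]
    (α : H →L[ℂ] H) (hiso : ∀ y : H, ‖α y‖ = ‖y‖)
    (E : Set H) (hE : E = {y : H | ∃ μ : ℂ, ‖μ‖ = 1 ∧ α y = μ • y})
    (K : Submodule ℂ H) (hK : K = (Submodule.span ℂ E).topologicalClosure)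
    (x : H) (hx : x ∈ Kᗮ) :
    ∀ t : ℝ, Tendsto (fun n : ℕ =>
        (n : ℂ)⁻¹ • ∑ l ∈ Finset.Icc 1 n,
          Complex.exp (2 * Real.pi * Complex.I * l * t) • (α ^ l) x)
      atTop (nhds 0) := by
  intro t
  -- the isometry as a LinearIsometry, to transfer inner products
  set L : H →ₗᵢ[ℂ] H := ⟨α.toLinearMap, hiso⟩ with hL
  have hinner : ∀ a b : H, ⟪α a, α b⟫ = ⟪a, b⟫ := fun a b => L.inner_map_map a b
  -- E ⊆ K
  have hEK : E ⊆ (K : Set H) := by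
    rw [hK]
    exact fun y hy =>
      (Submodule.le_topologicalClosure _) (Submodule.subset_span hy)
  -- α x ∈ Kᗮ
  have hαx : α x ∈ Kᗮ := by
    rw [Submodule.mem_orthogonal']
    intro u hu
    have hspan : Submodule.span ℂ E ≤ (ℂ ∙ (α x))ᗮ := by
      rw [Submodule.span_le]
      intro y hy
      rw [SetLike.mem_coe, Submodule.mem_orthogonal_singleton_iff_inner_right]
      obtain ⟨μ, hμ1, hμ⟩ := hE ▸ hy
      have hμ0 : μ ≠ 0 := by
        intro h; rw [h] at hμ1; simp at hμ1
      have hy' : α (μ⁻¹ • y) = y := by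
        rw [map_smul, hμ, smul_smul, inv_mul_cancel₀ hμ0, one_smul]
      calc ⟪α x, y⟫ = ⟪α x, α (μ⁻¹ • y)⟫ := by rw [hy']
        _ = ⟪x, μ⁻¹ • y⟫ := hinner _ _
        _ = μ⁻¹ * ⟪x, y⟫ := inner_smul_right _ _ _
        _ = 0 := by
            rw [Submodule.inner_left_of_mem_orthogonal (hEK hy) hx, mul_zero]
    have hKle : K ≤ (ℂ ∙ (α x))ᗮ := by
      rw [hK]
      exact Submodule.topologicalClosure_minimal _ hspan (ℂ ∙ (α x)).isClosed_orthogonal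
    exact Submodule.mem_orthogonal_singleton_iff_inner_right.mp (hKle hu)
  -- the twisted operator
  set c : ℂ := Complex.exp (2 * Real.pi * Complex.I * t) with hc
  have hcabs : ‖c‖ = 1 := by
    rw [hc]
    rw [Complex.norm_exp]
    have : (2 * Real.pi * Complex.I * t).re = 0 := by simp [Complex.mul_re]
    rw [this, Real.exp_zero]
  have hc0 : c ≠ 0 := Complex.exp_ne_zero _
  set β : H →L[ℂ] H := c • α with hβ
  have hβnorm : ‖β‖ ≤ 1 := by
    have hα : ‖α‖ ≤ 1 :=
      ContinuousLinearMap.opNorm_le_bound _ zero_le_one (fun y => by rw [hiso, one_mul])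
    calc ‖β‖ = ‖c‖ * ‖α‖ := norm_smul c α
      _ ≤ 1 * 1 := by
          refine mul_le_mul ?_ hα (norm_nonneg _) zero_le_one
          rw [hcabs]
      _ = 1 := one_mul 1
  -- fixed points of β lie in K
  have hfix : (β.eqLocus (1 : H →L[ℂ] H) : Submodule ℂ H) ≤ K := by
    intro y hy
    have hy' : β y = y := hy
    have : α y = c⁻¹ • y := by
      rw [eq_inv_smul_iff₀ hc0]
      exact hy'
    have hyE : y ∈ E := by
      rw [hE]
      exact ⟨c⁻¹, by rw [norm_inv, hcabs, inv_one], this⟩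
    exact hEK hyE
  -- β x ∈ Kᗮ, hence orthogonal to fixed points
  have hβx : β x ∈ (β.eqLocus (1 : H →L[ℂ] H))ᗮ := by
    have : β x ∈ Kᗮ := by
      rw [hβ]
      exact Submodule.smul_mem _ _ hαx
    exact Submodule.orthogonal_le hfix this
  -- mean ergodic theorem
  have hmet := ContinuousLinearMap.tendsto_birkhoffAverage_orthogonalProjection (𝕜 := ℂ) β
      hβnorm (β x)
  have hproj : Submodule.orthogonalProjectionOnto (β.eqLocus (1 : H →L[ℂ] H)) (β x) = 0 :=
    Submodule.orthogonalProjectionOnto_apply_of_mem_orthogonal hβx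
  rw [hproj] at hmet
  have hmet' : Tendsto (fun n => birkhoffAverage ℂ β _root_.id n (β x)) atTop (nhds 0) := by
    simpa using hmet
  -- identify the averages
  have key : ∀ n : ℕ, (n : ℂ)⁻¹ • ∑ l ∈ Finset.Icc 1 n,
      Complex.exp (2 * Real.pi * Complex.I * l * t) • (α ^ l) x
      = birkhoffAverage ℂ β _root_.id n (β x) := by
    intro n
    rw [birkhoffAverage, birkhoffSum]
    congr 1
    rw [← Finset.Ico_add_one_right_eq_Icc, Finset.sum_Ico_eq_sum_range]
    simp only [Nat.succ_sub_one, Nat.add_sub_cancel]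
    refine Finset.sum_congr rfl fun k _ => ?_
    have hexp : Complex.exp (2 * Real.pi * Complex.I * (↑(1 + k) : ℂ) * t) = c ^ (1 + k) := by
      rw [hc, ← Complex.exp_nat_mul]
      ring_nf
    have hiter : _root_.id ((⇑β)^[k] (β x)) = (β ^ (1 + k)) x := by
      simp only [_root_.id]
      rw [← ContinuousLinearMap.coe_coe β, ← Module.End.pow_apply, ← ContinuousLinearMap.toLinearMap_pow, ContinuousLinearMap.coe_coe, ContinuousLinearMap.coe_coe]
      have : (β ^ (1+k)) x = (β ^ k) (β x) := by
        rw [add_comm, pow_succ]; rfl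
      rw [this]
    rw [hiter, hexp, hβ, smul_pow]
    rw [ContinuousLinearMap.smul_apply]
  simpa only [key] using hmet'
end

section
/- Let H be a complex Hilbert space and T : H → H a linear isometry. Then for every x ∈ H the Cesàro averages (1/n) ∑_{k=0}^{n-1} T^k(x) converge in norm to P(x), where P is the orthogonal projection onto the fixed space {y ∈ H : T(y) = y} (mean ergodic theorem for isometries). -/
open Filter Finset
open scoped InnerProductSpace

/-- mean ergodic theorem for a linear isometry T of a complex Hilbert
space: the Cesàro averages (1/n) ∑_{k<n} T^k x converge in norm to the orthogonal
projection of x onto the fixed space {y : T y = y}; the limit y is characterized by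
T y = y together with x - y being orthogonal to every fixed vector. -/
theorem mean_ergodic_isometry
    {H : Type*} [NormedAddCommGroup H] [InnerProductSpace ℂ H] [CompleteSpace H]
    (T : H →ₗᵢ[ℂ] H) (x : H) :
    ∃ y : H, T y = y ∧ (∀ z : H, T z = z → ⟪x - y, z⟫_ℂ = 0) ∧
      Tendsto (fun n : ℕ => (n : ℂ)⁻¹ • ∑ k ∈ Finset.range n, (⇑T)^[k] x)
        atTop (nhds y) := by
  classical
  set A : H →L[ℂ] H := T.toContinuousLinearMap with hAdef
  have hAapp : ∀ u, A u = T u := fun u => rfl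
  set S : Submodule ℂ H := (A - ContinuousLinearMap.id ℂ H).ker with hSdef
  have hSmem : ∀ u : H, u ∈ S ↔ T u = u := by
    intro u
    simp [hSdef, LinearMap.mem_ker, sub_eq_zero, hAapp]
  have hSclosed : IsClosed (S : Set H) :=
    ContinuousLinearMap.isClosed_ker _
  haveI : CompleteSpace S := hSclosed.completeSpace_coe
  set y : H := (S.orthogonalProjectionOnto x : H) with hy
  have hyS : y ∈ S := SetLike.coe_mem _
  have hTy : T y = y := (hSmem y).1 hyS
  set v : H := x - y with hv
  have hvmem : v ∈ Sᗮ := S.sub_starProjection_mem_orthogonal x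
  refine ⟨y, hTy, ?_, ?_⟩
  · intro z hz
    have hzS : z ∈ S := (hSmem z).2 hz
    have := hvmem z hzS
    rw [← inner_conj_symm, this, map_zero]
  -- Main convergence
  · have hTk_norm : ∀ (k : ℕ) (u : H), ‖(⇑T)^[k] u‖ = ‖u‖ := by
      intro k
      induction k with
      | zero => intro u; simp
      | succ n ih =>
        intro u
        rw [Function.iterate_succ_apply, ih, T.norm_map]
    have hTk_sub : ∀ (k : ℕ) (a b : H), (⇑T)^[k] (a - b) = (⇑T)^[k] a - (⇑T)^[k] b := by
      intro k
      induction k with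
      | zero => intro a b; simp
      | succ n ih =>
        intro a b
        rw [Function.iterate_succ_apply, Function.iterate_succ_apply,
          Function.iterate_succ_apply, map_sub, ih]
    have hTk_add : ∀ (k : ℕ) (a b : H), (⇑T)^[k] (a + b) = (⇑T)^[k] a + (⇑T)^[k] b := by
      intro k
      induction k with
      | zero => intro a b; simp
      | succ n ih =>
        intro a b
        rw [Function.iterate_succ_apply, Function.iterate_succ_apply,
          Function.iterate_succ_apply, map_add, ih]
    have hTky : ∀ k : ℕ, (⇑T)^[k] y = y := by
      intro k
      induction k with
      | zero => rfl
      | succ n ih => rw [Function.iterate_succ_apply, hTy, ih]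
    -- range of I - T
    set R : Submodule ℂ H :=
      LinearMap.range ((ContinuousLinearMap.id ℂ H - A : H →L[ℂ] H) : H →ₗ[ℂ] H) with hRdef
    -- Rᗮ ≤ S
    have hRS : Rᗮ ≤ S := by
      intro u hu
      have key : ∀ w : H, ⟪w - T w, u⟫_ℂ = 0 := by
        intro w
        exact hu _ ⟨w, by simp [hAapp]⟩
      have h1 : ⟪T u, u⟫_ℂ = ⟪u, u⟫_ℂ := by
        have := key u
        rw [inner_sub_left, sub_eq_zero] at this
        exact this.symm
      have h2 : ‖T u - u‖ ^ 2 = 0 := by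
        rw [@norm_sub_sq ℂ]
        have hre : RCLike.re (⟪T u, u⟫_ℂ) = ‖u‖ ^ 2 := by
          rw [h1, inner_self_eq_norm_sq]
        rw [hre, T.norm_map]
        ring
      have h3 : T u = u := by
        have := pow_eq_zero_iff (n := 2) (by norm_num) |>.1 h2
        rwa [norm_eq_zero, sub_eq_zero] at this
      exact (hSmem u).2 h3
    have hvR : v ∈ R.topologicalClosure := by
      have h1 : Sᗮ ≤ Rᗮᗮ := Submodule.orthogonal_le hRS
      have h2 : Rᗮᗮ = R.topologicalClosure := Submodule.orthogonal_orthogonal_eq_closure R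
      exact h2 ▸ h1 hvmem
    -- norm bound on averages
    have hbound : ∀ (u : H) (n : ℕ), ‖(n : ℂ)⁻¹ • ∑ k ∈ Finset.range n, (⇑T)^[k] u‖ ≤ ‖u‖ := by
      intro u n
      rcases Nat.eq_zero_or_pos n with hn | hn
      · simp [hn]
      have hn' : (0 : ℝ) < n := by exact_mod_cast hn
      calc ‖(n : ℂ)⁻¹ • ∑ k ∈ Finset.range n, (⇑T)^[k] u‖
          = ‖(n : ℂ)⁻¹‖ * ‖∑ k ∈ Finset.range n, (⇑T)^[k] u‖ := norm_smul _ _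
        _ ≤ ‖(n : ℂ)⁻¹‖ * ∑ k ∈ Finset.range n, ‖(⇑T)^[k] u‖ := by
            gcongr
            exact norm_sum_le _ _
        _ = (n : ℝ)⁻¹ * (n * ‖u‖) := by
            simp [hTk_norm, Finset.sum_const, norm_inv]
        _ = ‖u‖ := by field_simp
    -- averages of v tend to 0
    have havg0 : Tendsto (fun n : ℕ => (n : ℂ)⁻¹ • ∑ k ∈ Finset.range n, (⇑T)^[k] v)
        atTop (nhds 0) := by
      rw [NormedAddCommGroup.tendsto_nhds_zero]
      intro ε hε
      have hclos : v ∈ closure (R : Set H) := hvR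
      rw [Metric.mem_closure_iff] at hclos
      obtain ⟨r, hrR, hrv⟩ := hclos (ε / 2) (by positivity)
      obtain ⟨w, hw⟩ := hrR
      have hw' : w - T w = r := by simpa [hAapp] using hw
      have hvr : ‖v - r‖ < ε / 2 := by rwa [← dist_eq_norm]
      -- telescoping
      have htel : ∀ n : ℕ, ∑ k ∈ Finset.range n, (⇑T)^[k] r = w - (⇑T)^[n] w := by
        intro n
        have hterm : ∀ k : ℕ, (⇑T)^[k] r = (⇑T)^[k] w - (⇑T)^[k+1] w := by
          intro k
          rw [← hw', hTk_sub, Function.iterate_succ_apply]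
        rw [Finset.sum_congr rfl (fun k _ => hterm k)]
        exact Finset.sum_range_sub' (fun k => (⇑T)^[k] w) n
      -- tail bound
      have htail : Tendsto (fun n : ℕ => 2 * ‖w‖ / n) atTop (nhds 0) :=
        tendsto_const_div_atTop_nhds_zero_nat _
      have hev : ∀ᶠ n : ℕ in atTop, 2 * ‖w‖ / n < ε / 2 := by
        have := htail.eventually (eventually_lt_nhds (show (0:ℝ) < ε / 2 by positivity))
        simpa using this
      filter_upwards [hev, eventually_ge_atTop 1] with n hn1 hn2
      have hnpos : (0 : ℝ) < n := by exact_mod_cast hn2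
      have hsplit : ∑ k ∈ Finset.range n, (⇑T)^[k] v
          = (∑ k ∈ Finset.range n, (⇑T)^[k] (v - r)) + ∑ k ∈ Finset.range n, (⇑T)^[k] r := by
        rw [← Finset.sum_add_distrib]
        refine Finset.sum_congr rfl fun k _ => ?_
        rw [← hTk_add, sub_add_cancel]
      calc ‖(n : ℂ)⁻¹ • ∑ k ∈ Finset.range n, (⇑T)^[k] v‖
          = ‖(n : ℂ)⁻¹ • ∑ k ∈ Finset.range n, (⇑T)^[k] (v - r)
              + (n : ℂ)⁻¹ • ∑ k ∈ Finset.range n, (⇑T)^[k] r‖ := by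
            rw [hsplit, smul_add]
        _ ≤ ‖(n : ℂ)⁻¹ • ∑ k ∈ Finset.range n, (⇑T)^[k] (v - r)‖
              + ‖(n : ℂ)⁻¹ • ∑ k ∈ Finset.range n, (⇑T)^[k] r‖ := norm_add_le _ _
        _ ≤ ‖v - r‖ + 2 * ‖w‖ / n := by
            gcongr
            · exact hbound _ _
            · rw [htel, norm_smul, norm_inv, Complex.norm_natCast]
              rw [inv_mul_le_iff₀ hnpos] -- might need different lemma name
              calc ‖w - (⇑T)^[n] w‖ ≤ ‖w‖ + ‖(⇑T)^[n] w‖ := norm_sub_le _ _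
                _ = 2 * ‖w‖ := by rw [hTk_norm]; ring
                _ = n * (2 * ‖w‖ / n) := by field_simp
        _ < ε / 2 + ε / 2 := by gcongr
        _ = ε := by ring
    -- assemble
    have heq : ∀ᶠ n : ℕ in atTop,
        (n : ℂ)⁻¹ • ∑ k ∈ Finset.range n, (⇑T)^[k] x
          = y + (n : ℂ)⁻¹ • ∑ k ∈ Finset.range n, (⇑T)^[k] v := by
      filter_upwards [eventually_ge_atTop 1] with n hn
      have hn0 : (n : ℂ) ≠ 0 := Nat.cast_ne_zero.mpr (by omega)
      have hxk : ∀ k : ℕ, (⇑T)^[k] x = y + (⇑T)^[k] v := by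
        intro k
        have : x = y + v := by rw [hv]; abel
        rw [this, hTk_add, hTky]
      rw [Finset.sum_congr rfl (fun k _ => hxk k), Finset.sum_add_distrib,
        Finset.sum_const, Finset.card_range, smul_add]
      congr 1
      rw [← Nat.cast_smul_eq_nsmul ℂ, smul_smul, inv_mul_cancel₀ hn0, one_smul]
    have : Tendsto (fun n : ℕ => y + (n : ℂ)⁻¹ • ∑ k ∈ Finset.range n, (⇑T)^[k] v)
        atTop (nhds (y + 0)) := tendsto_const_nhds.add havg0
    rw [add_zero] at this
    exact Tendsto.congr' (heq.mono fun n h => h.symm) this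
end

section
/- Let H be a complex Hilbert space, α : H → H an ergodic linear isometry (fixed space ℂ·u for a unit vector u) which is also multiplicative in the following abstract sense relative to a von Neumann algebra structure. Let E = {x ∈ H : α(x) = μx, |μ| = 1} and K = closure(span E). Suppose x ∈ K^⊥ and let σ_x be the positive finite Borel measure on ℝ/ℤ with σ̂_x(l) = ⟨x, α^l(x)⟩ for l ≥ 0 (Herglotz representation of the positive definite sequence γ_x). Then σ_x is a continuous measure (has no atoms). -/
open Filter Finset MeasureTheory
open scoped InnerProductSpace ComplexConjugate Topology

namespace SpecAux

lemma norm_fourier (n : ℤ) (t : AddCircle (1:ℝ)) : ‖fourier n t‖ = 1 := by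
  rw [fourier_apply, Circle.norm_coe]

lemma integrable_fourier (σ : Measure (AddCircle (1:ℝ))) [IsFiniteMeasure σ] (n : ℤ) :
    Integrable (fun t : AddCircle (1:ℝ) => (fourier n t : ℂ)) σ :=
  ⟨((fourier n).continuous).aestronglyMeasurable,
   HasFiniteIntegral.of_bounded (C := 1) (Eventually.of_forall fun t => (norm_fourier n t).le)⟩

/-- The Fejér-type kernel used for Wiener's lemma. -/
noncomputable def Fk (s : AddCircle (1:ℝ)) (N : ℕ) (t : AddCircle (1:ℝ)) : ℂ :=
  (N : ℂ)⁻¹ * ∑ l ∈ range N, fourier (-(l:ℤ)) s * fourier (l:ℤ) t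

lemma Fk_pow (s t : AddCircle (1:ℝ)) (l : ℕ) :
    fourier (-(l:ℤ)) s * fourier (l:ℤ) t = (fourier (-1) s * fourier 1 t) ^ l := by
  induction l with
  | zero => simp [fourier_zero]
  | succ l ih =>
      have h1 : (-(↑(l+1):ℤ)) = (-(l:ℤ)) + (-1) := by push_cast; ring
      have h2 : ((↑(l+1):ℤ)) = (l:ℤ) + 1 := by push_cast; ring
      rw [h1, h2, fourier_add, fourier_add, pow_succ, ← ih]
      ring

lemma Fk_bound (s : AddCircle (1:ℝ)) (N : ℕ) (t : AddCircle (1:ℝ)) : ‖Fk s N t‖ ≤ 1 := by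
  rcases Nat.eq_zero_or_pos N with h | h
  · simp [Fk, h]
  · have : ‖∑ l ∈ range N, fourier (-(l:ℤ)) s * fourier (l:ℤ) t‖ ≤ (N : ℝ) := by
      calc ‖∑ l ∈ range N, fourier (-(l:ℤ)) s * fourier (l:ℤ) t‖
          ≤ ∑ l ∈ range N, ‖fourier (-(l:ℤ)) s * fourier (l:ℤ) t‖ := norm_sum_le _ _
        _ ≤ ∑ _l ∈ range N, 1 := by
            refine Finset.sum_le_sum fun l _ => ?_
            rw [norm_mul, norm_fourier, norm_fourier, mul_one]
        _ = (N : ℝ) := by simp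
    rw [Fk, norm_mul, norm_inv, Complex.norm_natCast]
    calc (N:ℝ)⁻¹ * ‖∑ l ∈ range N, fourier (-(l:ℤ)) s * fourier (l:ℤ) t‖
        ≤ (N:ℝ)⁻¹ * N := by
          exact mul_le_mul_of_nonneg_left this (by positivity)
      _ = 1 := by field_simp

lemma Fk_self (s : AddCircle (1:ℝ)) (N : ℕ) (hN : 0 < N) : Fk s N s = 1 := by
  have : ∀ l ∈ range N, fourier (-(l:ℤ)) s * fourier (l:ℤ) s = 1 := by
    intro l _
    rw [← fourier_add, neg_add_cancel, fourier_zero]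
  rw [Fk, Finset.sum_congr rfl this]
  simp only [Finset.sum_const, card_range, nsmul_eq_mul, mul_one]
  rw [inv_mul_cancel₀]
  exact_mod_cast Nat.pos_iff_ne_zero.mp hN

lemma Fk_tendsto {s t : AddCircle (1:ℝ)} (ht : t ≠ s) :
    Tendsto (fun N => Fk s N t) atTop (𝓝 0) := by
  set z : ℂ := fourier (-1) s * fourier 1 t with hz
  have hz1 : z ≠ 1 := by
    intro h1
    apply ht
    have ha : ‖fourier (1:ℤ) s‖ = 1 := norm_fourier 1 s
    have h2 : fourier (1:ℤ) s * z = fourier (1:ℤ) s := by rw [h1, mul_one]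
    rw [hz, fourier_neg, ← mul_assoc, Complex.mul_conj] at h2
    have h3 : (Complex.normSq (fourier (1:ℤ) s) : ℂ) = 1 := by
      rw [Complex.normSq_eq_norm_sq, ha]
      norm_num
    rw [h3, one_mul] at h2
    rw [fourier_one, fourier_one] at h2
    exact AddCircle.injective_toCircle one_ne_zero (Circle.coe_injective h2)
  have hznorm : ‖z‖ = 1 := by
    rw [hz, norm_mul, norm_fourier, norm_fourier, mul_one]
  rw [tendsto_zero_iff_norm_tendsto_zero]
  have hb : ∀ N : ℕ, ‖Fk s N t‖ ≤ (2 / ‖z - 1‖) / N := by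
    intro N
    have : Fk s N t = (N : ℂ)⁻¹ * ((z ^ N - 1) / (z - 1)) := by
      rw [Fk]
      congr 1
      rw [Finset.sum_congr rfl fun l _ => Fk_pow s t l]
      exact geom_sum_eq hz1 N
    have hpos : 0 < ‖z - 1‖ := by
      rw [norm_pos_iff]; exact sub_ne_zero.mpr hz1
    have h2 : ‖z ^ N - 1‖ ≤ 2 := by
      calc ‖z ^ N - 1‖ ≤ ‖z ^ N‖ + ‖(1:ℂ)‖ := norm_sub_le _ _
        _ = 2 := by rw [norm_pow, hznorm, one_pow, norm_one]; norm_num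
    calc ‖Fk s N t‖ = (N:ℝ)⁻¹ * (‖z ^ N - 1‖ / ‖z - 1‖) := by
          rw [this, norm_mul, norm_inv, Complex.norm_natCast, norm_div]
      _ ≤ (N:ℝ)⁻¹ * (2 / ‖z - 1‖) := by gcongr
      _ = (2 / ‖z - 1‖) / N := by rw [inv_mul_eq_div]
  exact squeeze_zero (fun N => norm_nonneg _) hb (tendsto_const_div_atTop_nhds_zero_nat _)

lemma Fk_integrable (σ : Measure (AddCircle (1:ℝ))) [IsFiniteMeasure σ]
    (s : AddCircle (1:ℝ)) (N : ℕ) : Integrable (Fk s N) σ := by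
  have : Integrable (fun t => ∑ l ∈ range N, fourier (-(l:ℤ)) s * fourier (l:ℤ) t) σ := by
    rw [show (fun t => ∑ l ∈ range N, fourier (-(l:ℤ)) s * fourier (l:ℤ) t)
        = fun t => ∑ l ∈ range N, (fun u => fourier (-(l:ℤ)) s * fourier (l:ℤ) u) t from rfl]
    exact integrable_finset_sum _ fun l _ => (integrable_fourier σ (l:ℤ)).const_mul _
  exact this.const_mul _

lemma conj_Fk (s : AddCircle (1:ℝ)) (N : ℕ) (t : AddCircle (1:ℝ)) :
    (starRingEnd ℂ) (Fk s N t)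
      = (N : ℂ)⁻¹ * ∑ l ∈ range N, fourier (l:ℤ) s * fourier (-(l:ℤ)) t := by
  rw [Fk, map_mul, map_inv₀, map_natCast, map_sum]
  congr 1
  refine Finset.sum_congr rfl fun l _ => ?_
  have h1 : (starRingEnd ℂ) (fourier (-(l:ℤ)) s) = fourier (l:ℤ) s := by
    rw [fourier_neg, Complex.conj_conj]
  have h2 : (starRingEnd ℂ) (fourier (l:ℤ) t) = fourier (-(l:ℤ)) t := fourier_neg.symm
  rw [map_mul, h1, h2]

lemma Fk_tendsto_indicator (s t : AddCircle (1:ℝ)) :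
    Tendsto (fun N => Fk s N t) atTop
      (𝓝 (Set.indicator {s} (fun _ => (1:ℂ)) t)) := by
  by_cases h : t = s
  · subst h
    rw [Set.indicator_apply, if_pos (Set.mem_singleton t)]
    refine Tendsto.congr' ?_ tendsto_const_nhds
    filter_upwards [eventually_ge_atTop 1] with N hN
    exact (Fk_self t N hN).symm
  · rw [Set.indicator_apply, if_neg (by simpa using h)]
    exact Fk_tendsto h

lemma integral_indicator_singleton (σ : Measure (AddCircle (1:ℝ))) (s : AddCircle (1:ℝ)) :
    ∫ t, Set.indicator {s} (fun _ => (1:ℂ)) t ∂σ = ((σ {s}).toReal : ℂ) := by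
  rw [integral_indicator_const (1:ℂ) (measurableSet_singleton s)]
  simp
  rfl

lemma tendsto_integral_Fk (σ : Measure (AddCircle (1:ℝ))) [IsFiniteMeasure σ]
    (s : AddCircle (1:ℝ)) :
    Tendsto (fun N => ∫ t, Fk s N t ∂σ) atTop (𝓝 ((σ {s}).toReal : ℂ)) := by
  rw [← integral_indicator_singleton σ s]
  refine tendsto_integral_filter_of_dominated_convergence (fun _ => (1:ℝ))
    (Eventually.of_forall fun N => (Fk_integrable σ s N).aestronglyMeasurable)
    (Eventually.of_forall fun N => Eventually.of_forall fun t => Fk_bound s N t)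
    (integrable_const 1)
    (Eventually.of_forall fun t => Fk_tendsto_indicator s t)

lemma tendsto_integral_Fk2 (σ : Measure (AddCircle (1:ℝ))) [IsFiniteMeasure σ]
    (s : AddCircle (1:ℝ)) :
    Tendsto (fun p : ℕ × ℕ => ∫ t, (starRingEnd ℂ) (Fk s p.1 t) * Fk s p.2 t ∂σ)
      (atTop ×ˢ atTop) (𝓝 ((σ {s}).toReal : ℂ)) := by
  rw [← integral_indicator_singleton σ s]
  refine tendsto_integral_filter_of_dominated_convergence (fun _ => (1:ℝ))
    (Eventually.of_forall fun p =>
      ((Complex.continuous_conj.comp_aestronglyMeasurable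
        (Fk_integrable σ s p.1).aestronglyMeasurable).mul
        (Fk_integrable σ s p.2).aestronglyMeasurable))
    (Eventually.of_forall fun p => Eventually.of_forall fun t => ?_)
    (integrable_const 1)
    (Eventually.of_forall fun t => ?_)
  · rw [norm_mul, RCLike.norm_conj]
    exact mul_le_one₀ (Fk_bound s p.1 t) (norm_nonneg _) (Fk_bound s p.2 t)
  · have h1 : Tendsto (fun p : ℕ × ℕ => (starRingEnd ℂ) (Fk s p.1 t))
        (atTop ×ˢ atTop) (𝓝 ((starRingEnd ℂ) (Set.indicator {s} (fun _ => (1:ℂ)) t))) :=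
      ((Complex.continuous_conj.tendsto _).comp
        ((Fk_tendsto_indicator s t).comp tendsto_fst))
    have h2 : Tendsto (fun p : ℕ × ℕ => Fk s p.2 t) (atTop ×ˢ atTop)
        (𝓝 (Set.indicator {s} (fun _ => (1:ℂ)) t)) :=
      (Fk_tendsto_indicator s t).comp tendsto_snd
    have := h1.mul h2
    convert this using 2
    by_cases h : t ∈ ({s} : Set (AddCircle (1:ℝ)))
    · simp [Set.indicator_apply, Set.mem_singleton_iff.mp h]
    · simp [Set.indicator_apply, if_neg (by simpa using h)]

end SpecAux

set_option maxHeartbeats 2000000 in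
open SpecAux in
/-- if x is orthogonal to the closed span K of the unimodular
eigenvectors of a linear isometry α of a complex Hilbert space, and σ is the
Herglotz representing measure of the positive definite correlation sequence
γ_x(l) = ⟪x, α^l x⟫, then σ is continuous (has no atoms). -/
theorem spectral_measure_continuous_on_orthocomplement
    {H : Type*} [NormedAddCommGroup H] [InnerProductSpace ℂ H] [CompleteSpace H]
    (α : H →ₗᵢ[ℂ] H)
    (E : Set H) (hE : E = {y : H | ∃ μ : ℂ, ‖μ‖ = 1 ∧ α y = μ • y})
    (K : Submodule ℂ H) (hK : K = (Submodule.span ℂ E).topologicalClosure)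
    (x : H) (hx : x ∈ Kᗮ)
    (σ : Measure (AddCircle (1 : ℝ))) [IsFiniteMeasure σ]
    (hσ : ∀ l : ℕ, (∫ t : AddCircle (1 : ℝ), fourier (l : ℤ) t ∂σ) = ⟪x, (⇑α)^[l] x⟫_ℂ) :
    ∀ s : AddCircle (1 : ℝ), σ {s} = 0 := by
  intro s
  classical
  set A : ℝ := (σ {s}).toReal with hA
  -- shift invariance of correlations
  have hshift : ∀ (k l m : ℕ),
      ⟪(⇑α)^[k + l] x, (⇑α)^[k + m] x⟫_ℂ = ⟪(⇑α)^[l] x, (⇑α)^[m] x⟫_ℂ := by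
    intro k
    induction k with
    | zero => intro l m; simp
    | succ k ih =>
        intro l m
        have e1 : k + 1 + l = (k + l) + 1 := by omega
        have e2 : k + 1 + m = (k + m) + 1 := by omega
        rw [e1, e2, Function.iterate_succ_apply', Function.iterate_succ_apply',
          α.inner_map_map, ih]
  set g : ℤ → ℂ := fun l => ∫ t, fourier l t ∂σ with hg
  have hgnat : ∀ l : ℕ, g (l : ℤ) = ⟪x, (⇑α)^[l] x⟫_ℂ := fun l => hσ l
  have hgconj : ∀ l : ℤ, g (-l) = (starRingEnd ℂ) (g l) := by
    intro l
    show (∫ t, fourier (-l) t ∂σ) = (starRingEnd ℂ) (∫ t, fourier l t ∂σ)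
    simp_rw [fourier_neg]
    rw [integral_conj]
  have hcorr : ∀ l m : ℕ, ⟪(⇑α)^[l] x, (⇑α)^[m] x⟫_ℂ = g ((m : ℤ) - (l : ℤ)) := by
    intro l m
    rcases le_total l m with h | h
    · obtain ⟨k, rfl⟩ := Nat.exists_eq_add_of_le h
      have h1 : ((l + k : ℕ) : ℤ) - (l : ℤ) = (k : ℤ) := by push_cast; ring
      rw [h1, hgnat k]
      have := hshift l 0 k
      simpa using this
    · obtain ⟨k, rfl⟩ := Nat.exists_eq_add_of_le h
      have h1 : ((m : ℕ) : ℤ) - ((m + k : ℕ) : ℤ) = -(k : ℤ) := by push_cast; ring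
      rw [h1, hgconj, hgnat k]
      have := hshift m k 0
      simp only [Nat.add_zero] at this
      rw [this]
      exact (inner_conj_symm _ _).symm
  -- the averaged vectors
  set y : ℕ → H := fun N => (N : ℂ)⁻¹ • ∑ l ∈ range N, fourier (-(l:ℤ)) s • (⇑α)^[l] x with hy
  have hxy : ∀ N : ℕ, ⟪x, y N⟫_ℂ = ∫ t, Fk s N t ∂σ := by
    intro N
    have hR : (∫ t, Fk s N t ∂σ)
        = (N : ℂ)⁻¹ * ∑ l ∈ range N, fourier (-(l:ℤ)) s * g (l : ℤ) := by
      calc ∫ t, Fk s N t ∂σ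
          = (N : ℂ)⁻¹ * ∫ t, ∑ l ∈ range N, fourier (-(l:ℤ)) s * fourier (l:ℤ) t ∂σ := by
            unfold Fk; rw [integral_const_mul]
        _ = (N : ℂ)⁻¹ * ∑ l ∈ range N, ∫ t, fourier (-(l:ℤ)) s * fourier (l:ℤ) t ∂σ := by
            rw [integral_finset_sum (μ := σ) (range N)
              (f := fun (l : ℕ) (t : AddCircle (1:ℝ)) => fourier (-(l:ℤ)) s * fourier (l:ℤ) t)
              (fun l _ => (integrable_fourier σ (l:ℤ)).const_mul _)]
        _ = (N : ℂ)⁻¹ * ∑ l ∈ range N, fourier (-(l:ℤ)) s * g (l:ℤ) := by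
            congr 1
            exact Finset.sum_congr rfl fun l _ => integral_const_mul _ _
    rw [hR, hy]
    rw [inner_smul_right, inner_sum]
    congr 1
    refine Finset.sum_congr rfl fun l _ => ?_
    rw [inner_smul_right, hgnat l]
  have hyy : ∀ N M : ℕ, ⟪y N, y M⟫_ℂ
      = ∫ t, (starRingEnd ℂ) (Fk s N t) * Fk s M t ∂σ := by
    intro N M
    have hL : ⟪y N, y M⟫_ℂ = (N:ℂ)⁻¹ * ((M:ℂ)⁻¹ * ∑ l ∈ range N, ∑ m ∈ range M,
        (fourier (l:ℤ) s * fourier (-(m:ℤ)) s) * g ((m:ℤ) - (l:ℤ))) := by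
      rw [hy]
      rw [inner_smul_left, inner_smul_right, map_inv₀, map_natCast, sum_inner]
      congr 1
      congr 1
      refine Finset.sum_congr rfl fun l _ => ?_
      rw [inner_smul_left, inner_sum]
      have hcl : (starRingEnd ℂ) (fourier (-(l:ℤ)) s) = fourier (l:ℤ) s := by
        rw [fourier_neg, Complex.conj_conj]
      rw [hcl, Finset.mul_sum]
      refine Finset.sum_congr rfl fun m _ => ?_
      rw [inner_smul_right, hcorr l m]
      ring
    have hptw : ∀ t, (starRingEnd ℂ) (Fk s N t) * Fk s M t
        = ∑ l ∈ range N, ∑ m ∈ range M,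
          ((N:ℂ)⁻¹ * (M:ℂ)⁻¹) * (((fourier (l:ℤ) s * fourier (-(m:ℤ)) s))
            * fourier ((m:ℤ) - (l:ℤ)) t) := by
      intro t
      rw [conj_Fk]
      show ((N:ℂ)⁻¹ * ∑ l ∈ range N, fourier (l:ℤ) s * fourier (-(l:ℤ)) t)
          * ((M:ℂ)⁻¹ * ∑ m ∈ range M, fourier (-(m:ℤ)) s * fourier (m:ℤ) t) = _
      calc ((N:ℂ)⁻¹ * ∑ l ∈ range N, fourier (l:ℤ) s * fourier (-(l:ℤ)) t)
            * ((M:ℂ)⁻¹ * ∑ m ∈ range M, fourier (-(m:ℤ)) s * fourier (m:ℤ) t)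
          = ((N:ℂ)⁻¹ * (M:ℂ)⁻¹) * ((∑ l ∈ range N, fourier (l:ℤ) s * fourier (-(l:ℤ)) t)
            * (∑ m ∈ range M, fourier (-(m:ℤ)) s * fourier (m:ℤ) t)) := by ring
        _ = ((N:ℂ)⁻¹ * (M:ℂ)⁻¹) * ∑ l ∈ range N, ∑ m ∈ range M,
              (fourier (l:ℤ) s * fourier (-(l:ℤ)) t)
              * (fourier (-(m:ℤ)) s * fourier (m:ℤ) t) := by rw [Finset.sum_mul_sum]
        _ = _ := by
            rw [Finset.mul_sum]
            refine Finset.sum_congr rfl fun l _ => ?_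
            rw [Finset.mul_sum]
            refine Finset.sum_congr rfl fun m _ => ?_
            have hf : fourier ((m:ℤ) - (l:ℤ)) t = fourier (m:ℤ) t * fourier (-(l:ℤ)) t := by
              rw [show (m:ℤ) - (l:ℤ) = (m:ℤ) + (-(l:ℤ)) from by ring, fourier_add]
            rw [hf]
            ring
    have hR : (∫ t, (starRingEnd ℂ) (Fk s N t) * Fk s M t ∂σ)
        = (N:ℂ)⁻¹ * ((M:ℂ)⁻¹ * ∑ l ∈ range N, ∑ m ∈ range M,
          (fourier (l:ℤ) s * fourier (-(m:ℤ)) s) * g ((m:ℤ) - (l:ℤ))) := by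
      rw [integral_congr_ae (Eventually.of_forall hptw)]
      rw [integral_finset_sum (μ := σ) (range N)
        (f := fun (l : ℕ) (t : AddCircle (1:ℝ)) => ∑ m ∈ range M,
          ((N:ℂ)⁻¹ * (M:ℂ)⁻¹) * (((fourier (l:ℤ) s * fourier (-(m:ℤ)) s))
            * fourier ((m:ℤ) - (l:ℤ)) t))
        (fun l _ => integrable_finset_sum _ fun m _ =>
          ((integrable_fourier σ _).const_mul _).const_mul _)]
      rw [← mul_assoc, Finset.mul_sum]
      refine Finset.sum_congr rfl fun l _ => ?_
      rw [integral_finset_sum (μ := σ) (range M)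
        (f := fun (m : ℕ) (t : AddCircle (1:ℝ)) =>
          ((N:ℂ)⁻¹ * (M:ℂ)⁻¹) * (((fourier (l:ℤ) s * fourier (-(m:ℤ)) s))
            * fourier ((m:ℤ) - (l:ℤ)) t))
        (fun m _ => ((integrable_fourier σ _).const_mul _).const_mul _), Finset.mul_sum]
      refine Finset.sum_congr rfl fun m _ => ?_
      rw [integral_const_mul, integral_const_mul]
    rw [hL, hR]
  -- limits
  have hxylim : Tendsto (fun N => ⟪x, y N⟫_ℂ) atTop (𝓝 (A : ℂ)) :=
    (tendsto_integral_Fk σ s).congr fun N => (hxy N).symm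
  have hyylim : Tendsto (fun p : ℕ × ℕ => ⟪y p.1, y p.2⟫_ℂ) (atTop ×ˢ atTop) (𝓝 (A : ℂ)) :=
    (tendsto_integral_Fk2 σ s).congr fun p => (hyy p.1 p.2).symm
  -- Cauchy sequence
  have hdiag1 : Tendsto (fun p : ℕ × ℕ => (p.1, p.1)) (atTop ×ˢ atTop) (atTop ×ˢ atTop) :=
    tendsto_fst.prodMk tendsto_fst
  have hdiag2 : Tendsto (fun p : ℕ × ℕ => (p.2, p.2)) (atTop ×ˢ atTop) (atTop ×ˢ atTop) :=
    tendsto_snd.prodMk tendsto_snd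
  have h11 : Tendsto (fun p : ℕ × ℕ => ⟪y p.1, y p.1⟫_ℂ) (atTop ×ˢ atTop) (𝓝 (A : ℂ)) :=
    by have h := hyylim.comp hdiag1; exact h
  have h22 : Tendsto (fun p : ℕ × ℕ => ⟪y p.2, y p.2⟫_ℂ) (atTop ×ˢ atTop) (𝓝 (A : ℂ)) :=
    by have h := hyylim.comp hdiag2; exact h
  have hre : ∀ {u : ℕ × ℕ → ℂ}, Tendsto u (atTop ×ˢ atTop) (𝓝 (A : ℂ)) →
      Tendsto (fun p => (u p).re) (atTop ×ˢ atTop) (𝓝 A) := by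
    intro u hu
    have := (Complex.continuous_re.tendsto _).comp hu
    exact this
  have hnorm2 : Tendsto (fun p : ℕ × ℕ => ‖y p.1 - y p.2‖ ^ 2) (atTop ×ˢ atTop) (𝓝 0) := by
    have hcomb : Tendsto (fun p : ℕ × ℕ =>
        ((⟪y p.1, y p.1⟫_ℂ).re - 2 * (⟪y p.1, y p.2⟫_ℂ).re + (⟪y p.2, y p.2⟫_ℂ).re))
        (atTop ×ˢ atTop) (𝓝 (A - 2 * A + A)) :=
      ((hre h11).sub ((hre hyylim).const_mul 2)).add (hre h22)
    have hzero : A - 2 * A + A = 0 := by ring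
    rw [hzero] at hcomb
    refine hcomb.congr fun p => ?_
    rw [@norm_sub_sq ℂ _ _ _ _ (y p.1) (y p.2)]
    rw [← inner_self_eq_norm_sq (𝕜 := ℂ) (y p.1), ← inner_self_eq_norm_sq (𝕜 := ℂ) (y p.2)]
    rfl
  have hCauchy : CauchySeq y := by
    rw [cauchySeq_iff_tendsto_dist_atTop_0, ← prod_atTop_atTop_eq]
    have hsq := (Real.continuous_sqrt.tendsto 0).comp hnorm2
    rw [Real.sqrt_zero] at hsq
    refine hsq.congr fun p => ?_
    show Real.sqrt (‖y p.1 - y p.2‖ ^ 2) = dist (y p.1) (y p.2)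
    rw [Real.sqrt_sq (norm_nonneg _), dist_eq_norm]
  obtain ⟨w, hw⟩ := cauchySeq_tendsto_of_complete hCauchy
  -- eigenvector property
  set c : ℂ := fourier (1 : ℤ) s with hc
  have hcnorm : ‖c‖ = 1 := norm_fourier 1 s
  have hitnorm : ∀ l : ℕ, ‖(⇑α)^[l] x‖ = ‖x‖ := by
    intro l
    induction l with
    | zero => rfl
    | succ l ih => rw [Function.iterate_succ_apply', α.norm_map, ih]
  set b : ℕ → H := fun l => (c * fourier (-(l:ℤ)) s) • (⇑α)^[l] x with hb
  have hnormb : ∀ l : ℕ, ‖b l‖ = ‖x‖ := by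
    intro l
    rw [hb]
    simp only
    rw [norm_smul, norm_mul, hcnorm, norm_fourier, one_mul, one_mul, hitnorm l]
  have hαy : ∀ N : ℕ, c • y N - α (y N) = (N : ℂ)⁻¹ • (b 0 - b N) := by
    intro N
    rw [hy]
    simp only
    rw [_root_.map_smul, _root_.map_sum]
    rw [smul_comm c ((N:ℂ)⁻¹), ← smul_sub]
    congr 1
    rw [Finset.smul_sum, ← Finset.sum_sub_distrib]
    rw [← Finset.sum_range_sub' b N]
    refine Finset.sum_congr rfl fun l _ => ?_
    congr 1
    · rw [hb]; simp only; rw [smul_smul]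
    · rw [hb]
      simp only
      rw [_root_.map_smul, Function.iterate_succ_apply']
      congr 1
      rw [hc, ← fourier_add]
      congr 1
      push_cast
      ring
  have hDlim : Tendsto (fun N => c • y N - α (y N)) atTop (𝓝 (0 : H)) := by
    apply squeeze_zero_norm (a := fun N : ℕ => (2 * ‖x‖) / N)
    · intro N
      rw [hαy N, norm_smul, norm_inv, Complex.norm_natCast]
      have : ‖b 0 - b N‖ ≤ 2 * ‖x‖ := by
        calc ‖b 0 - b N‖ ≤ ‖b 0‖ + ‖b N‖ := norm_sub_le _ _
          _ = 2 * ‖x‖ := by rw [hnormb 0, hnormb N]; ring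
      calc (N:ℝ)⁻¹ * ‖b 0 - b N‖ ≤ (N:ℝ)⁻¹ * (2 * ‖x‖) := by
            exact mul_le_mul_of_nonneg_left this (by positivity)
        _ = (2 * ‖x‖) / N := by rw [inv_mul_eq_div]
    · exact tendsto_const_div_atTop_nhds_zero_nat _
  have hαw : α w = c • w := by
    have h1 : Tendsto (fun N => α (y N)) atTop (𝓝 (α w)) := (α.continuous.tendsto w).comp hw
    have h2 : Tendsto (fun N => c • y N) atTop (𝓝 (c • w)) := hw.const_smul c
    have h3 : Tendsto (fun N => c • y N - α (y N)) atTop (𝓝 (c • w - α w)) := h2.sub h1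
    have h4 := tendsto_nhds_unique h3 hDlim
    have := sub_eq_zero.mp h4
    exact this.symm
  have hwK : w ∈ K := by
    rw [hK]
    apply Submodule.le_topologicalClosure
    apply Submodule.subset_span
    rw [hE]
    exact ⟨c, hcnorm, hαw⟩
  have hinner0 : ⟪x, w⟫_ℂ = 0 := by
    have h0 : ⟪w, x⟫_ℂ = 0 := (Submodule.mem_orthogonal K x).mp hx w hwK
    rw [← inner_conj_symm, h0, map_zero]
  have hxw : ⟪x, w⟫_ℂ = (A : ℂ) :=
    tendsto_nhds_unique (tendsto_const_nhds.inner hw) hxylim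
  have hA0 : A = 0 := by
    have : (A : ℂ) = 0 := by rw [← hxw, hinner0]
    exact_mod_cast this
  rw [hA] at hA0
  have := (ENNReal.toReal_eq_zero_iff _).mp hA0
  rcases this with h | h
  · exact h
  · exact absurd h (measure_ne_top σ {s})
end

section
/- Let H be a complex Hilbert space, α a linear isometry of H, E the set of unimodular eigenvectors of α, K = closure(span E), and x ∈ K^⊥. Assume the Cesàro averages (1/n)∑_{l=1}^{n} e^{2πilt} α^l(x) converge in norm for every t (mean ergodic theorem). Then for every t ∈ ℝ: lim_{n→∞} (1/n) ∑_{l=1}^{n} e^{2πilt} ⟨x, α^l(x)⟩ = 0. -/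
open Filter Finset
open scoped InnerProductSpace

/-- for x orthogonal to the closed span K of the unimodular
eigenvectors of the isometry α, assuming the twisted Cesàro averages converge in
norm for every t, the scalar averages (1/n) ∑_{l=1}^n e^{2πilt} ⟪x, α^l x⟫ tend
to 0 for every t. -/
theorem scalar_twisted_averages_tendsto_zero
    {H : Type*} [NormedAddCommGroup H] [InnerProductSpace ℂ H] [CompleteSpace H]
    (α : H →ₗᵢ[ℂ] H)
    (E : Set H) (hE : E = {y : H | ∃ μ : ℂ, ‖μ‖ = 1 ∧ α y = μ • y})
    (K : Submodule ℂ H) (hK : K = (Submodule.span ℂ E).topologicalClosure)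
    (x : H) (hx : x ∈ Kᗮ)
    (hme : ∀ t : ℝ, ∃ xbar : H, Tendsto (fun n : ℕ =>
        (n : ℂ)⁻¹ • ∑ l ∈ Finset.Icc 1 n,
          Complex.exp (2 * Real.pi * Complex.I * l * t) • (⇑α)^[l] x)
      atTop (nhds xbar)) :
    ∀ t : ℝ, Tendsto (fun n : ℕ =>
        (n : ℂ)⁻¹ * ∑ l ∈ Finset.Icc 1 n,
          Complex.exp (2 * Real.pi * Complex.I * l * t) * ⟪x, (⇑α)^[l] x⟫_ℂ)
      atTop (nhds 0) := by
  intro t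
  obtain ⟨xbar, hxbar⟩ := hme t
  set c : ℂ := Complex.exp (2 * Real.pi * Complex.I * t) with hc
  have hcl : ∀ l : ℕ, Complex.exp (2 * Real.pi * Complex.I * l * t) = c ^ l := by
    intro l
    rw [hc, ← Complex.exp_nat_mul]
    ring_nf
  set f : ℕ → H := fun l => c ^ l • (⇑α)^[l] x with hf
  set S : ℕ → H := fun n => (n : ℂ)⁻¹ • ∑ l ∈ Finset.Icc 1 n, f l with hS
  have hxbar' : Tendsto S atTop (nhds xbar) := by
    have : (fun n : ℕ => (n : ℂ)⁻¹ • ∑ l ∈ Finset.Icc 1 n,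
        Complex.exp (2 * Real.pi * Complex.I * l * t) • (⇑α)^[l] x) = S := by
      funext n
      simp only [hS, hf]
      congr 1
      exact Finset.sum_congr rfl (fun l _ => by rw [hcl l])
    rwa [this] at hxbar
  have habs : ‖c‖ = 1 := by
    rw [hc, Complex.norm_exp]
    have : (2 * (Real.pi : ℂ) * Complex.I * (t : ℂ)).re = 0 := by
      simp [Complex.mul_re, Complex.mul_im]
    rw [this, Real.exp_zero]
  have hnorm : ∀ l : ℕ, ‖(⇑α)^[l] x‖ = ‖x‖ := by
    intro l
    induction l with
    | zero => simp
    | succ n ih => rw [Function.iterate_succ_apply', α.norm_map, ih]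
  have hnormf : ∀ l : ℕ, ‖f l‖ = ‖x‖ := by
    intro l
    rw [hf]
    simp only [norm_smul, norm_pow, habs, one_pow, one_mul, hnorm]
  have e1 : ∀ (g : ℕ → H) (n : ℕ), ∑ l ∈ Finset.Icc 1 n, g l
      = ∑ i ∈ Finset.range n, g (i + 1) := by
    intro g n
    induction n with
    | zero => simp
    | succ m ih =>
      rw [Finset.sum_Icc_succ_top (Nat.one_le_iff_ne_zero.mpr (Nat.succ_ne_zero m)),
        Finset.sum_range_succ, ih]
  have hshift : ∀ n : ℕ, ∑ l ∈ Finset.Icc 1 n, f (l + 1)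
      = ∑ l ∈ Finset.Icc 1 n, f l + f (n + 1) - f 1 := by
    intro n
    rw [e1 (fun l => f (l + 1)) n, e1 f n, eq_sub_iff_add_eq]
    have h3 := Finset.sum_range_succ (fun l => f (l + 1)) n
    have h4 := Finset.sum_range_succ' (fun l => f (l + 1)) n
    rw [← h3] at *
    simpa using h4.symm
  have key : ∀ n : ℕ, c • α (S n) = S n + (n : ℂ)⁻¹ • (f (n + 1) - f 1) := by
    intro n
    have h1 : c • α (S n) = (n : ℂ)⁻¹ • ∑ l ∈ Finset.Icc 1 n, f (l + 1) := by
      simp only [hS, map_smul, map_sum]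
      rw [smul_comm, Finset.smul_sum]
      congr 1
      refine Finset.sum_congr rfl (fun l _ => ?_)
      simp only [hf, map_smul, Function.iterate_succ_apply', smul_smul, pow_succ, mul_comm]
    rw [h1, hshift n, add_sub_assoc, smul_add, hS]
  have herr : Tendsto (fun n : ℕ => (n : ℂ)⁻¹ • (f (n + 1) - f 1)) atTop (nhds 0) := by
    have hb : ∀ n : ℕ, ‖(n : ℂ)⁻¹ • (f (n + 1) - f 1)‖ ≤ (n : ℝ)⁻¹ * (2 * ‖x‖) := by
      intro n
      rw [norm_smul]
      gcongr
      · rw [norm_inv, Complex.norm_natCast]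
      · calc ‖f (n + 1) - f 1‖ ≤ ‖f (n + 1)‖ + ‖f 1‖ := norm_sub_le _ _
          _ = 2 * ‖x‖ := by rw [hnormf, hnormf]; ring
    have hg : Tendsto (fun n : ℕ => (n : ℝ)⁻¹ * (2 * ‖x‖)) atTop (nhds 0) := by
      simpa using tendsto_inv_atTop_nhds_zero_nat.mul_const (2 * ‖x‖)
    exact squeeze_zero_norm hb hg
  have hlim1 : Tendsto (fun n : ℕ => c • α (S n)) atTop (nhds (c • α xbar)) :=
    ((α.continuous.tendsto xbar).comp hxbar').const_smul c
  have hlim2 : Tendsto (fun n : ℕ => c • α (S n)) atTop (nhds xbar) := by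
    simp only [key]
    simpa using hxbar'.add herr
  have hfix : c • α xbar = xbar := tendsto_nhds_unique hlim1 hlim2
  have hc0 : c ≠ 0 := Complex.exp_ne_zero _
  have heig : α xbar = c⁻¹ • xbar := by
    have := congrArg (fun y => c⁻¹ • y) hfix
    simpa [inv_smul_smul₀ hc0] using this
  have hmemE : xbar ∈ E := by
    rw [hE]
    exact ⟨c⁻¹, by rw [norm_inv, habs]; norm_num, heig⟩
  have hmemK : xbar ∈ K := by
    rw [hK]
    exact Submodule.le_topologicalClosure _ (Submodule.subset_span hmemE)
  have hinner : ⟪x, xbar⟫_ℂ = 0 := by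
    rw [inner_eq_zero_symm]
    exact (Submodule.mem_orthogonal K x).mp hx xbar hmemK
  have hfinal : Tendsto (fun n : ℕ => ⟪x, S n⟫_ℂ) atTop (nhds ⟪x, xbar⟫_ℂ) :=
    Tendsto.inner tendsto_const_nhds hxbar'
  rw [hinner] at hfinal
  convert hfinal using 2 with n
  simp only [hS, hf, inner_smul_right, inner_sum]
  congr 1
  exact Finset.sum_congr rfl (fun l _ => by rw [hcl l])
end
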